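/- arXiv:2011.01027 — 3 statements merged into one kernel-verified Lean document; each statement's English description precedes it below -/
import Mathlib

section
/- The set {w ∈ ℂ : |w(1+w)| = 1} is homeomorphic to the circle S¹. -/
open Complex

noncomputable def sfn (t : ℝ) : ℝ := (t + Real.sqrt (t^2 + 15)) / 4

lemma sqrt_gt (t : ℝ) : |t| < Real.sqrt (t^2 + 15) := by
  have h : t^2 < t^2 + 15 := by linarith
  calc |t| = Real.sqrt (t^2) := (Real.sqrt_sq_eq_abs t).symm
  _ < _ := Real.sqrt_lt_sqrt (sq_nonneg t) h

lemma sfn_pos (t : ℝ) : 0 < sfn t := by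
  have h1 := sqrt_gt t
  have h2 := neg_abs_le t
  unfold sfn; linarith

lemma sfn_eq (t : ℝ) : (sfn t)^2 = t * sfn t / 2 + 15/16 := by
  have h : Real.sqrt (t^2+15) ^ 2 = t^2 + 15 := Real.sq_sqrt (by positivity)
  unfold sfn; nlinarith [h]

lemma sfn_half_lt (t : ℝ) : t/2 < sfn t := by
  have h1 := sqrt_gt t
  have h2 := le_abs_self t
  unfold sfn; linarith

lemma sfn_unique {t s : ℝ} (hs : 0 < s) (h : s^2 = t*s/2 + 15/16) : s = sfn t := by
  have h1 := sfn_eq t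
  have h3 := sfn_half_lt t
  have key : (s - sfn t) * (s + sfn t - t/2) = 0 := by nlinarith
  have hpos : s + sfn t - t/2 > 0 := by linarith
  have := mul_eq_zero.mp key
  rcases this with h' | h'
  · linarith
  · linarith

noncomputable def F (u : ℂ) : ℂ := -1/2 + (Real.sqrt (sfn ((u^2).re)) : ℂ) * u

noncomputable def G (w : ℂ) : ℂ := (w + 1/2) / ((‖w + 1/2‖ : ℝ) : ℂ)

lemma F_form (u : ℂ) : F u * (1 + F u) = ((sfn ((u^2).re) : ℝ) : ℂ) * u^2 - 1/4 := by
  have h : ((Real.sqrt (sfn ((u^2).re)) : ℝ) : ℂ)^2 = ((sfn ((u^2).re) : ℝ) : ℂ) := by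
    norm_cast
    exact Real.sq_sqrt (sfn_pos _).le
  unfold F
  linear_combination u^2 * h

lemma normSq_u2 (u : ℂ) (hu : ‖u‖ = 1) : (u^2).re^2 + (u^2).im^2 = 1 := by
  have : Complex.normSq (u^2) = 1 := by
    rw [map_pow, Complex.normSq_eq_norm_sq, hu]; norm_num
  simpa [Complex.normSq_apply, sq] using this

lemma F_mem (u : ℂ) (hu : ‖u‖ = 1) : ‖F u * (1 + F u)‖ = 1 := by
  rw [F_form]
  set t := (u^2).re with ht
  set s := sfn t with hs
  have hns : Complex.normSq (((s:ℝ):ℂ) * u^2 - 1/4) = 1 := by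
    have h1 := normSq_u2 u hu
    have h2 := sfn_eq t
    simp only [Complex.normSq_apply, Complex.sub_re, Complex.sub_im, Complex.mul_re,
      Complex.mul_im, Complex.ofReal_re, Complex.ofReal_im]
    norm_num
    nlinarith [h1, h2]
  rw [Complex.norm_def, hns, Real.sqrt_one]

lemma G_F (u : ℂ) (hu : ‖u‖ = 1) : G (F u) = u := by
  set s := sfn ((u^2).re) with hs
  have hsp := sfn_pos ((u^2).re)
  have hr : Real.sqrt s > 0 := Real.sqrt_pos.mpr hsp
  have h1 : F u + 1/2 = ((Real.sqrt s : ℝ) : ℂ) * u := by unfold F; ring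
  unfold G
  rw [h1]
  have habs : ‖((Real.sqrt s : ℝ) : ℂ) * u‖ = Real.sqrt s := by
    rw [norm_mul, Complex.norm_real, Real.norm_eq_abs, hu, abs_of_pos hr, mul_one]
  rw [habs]
  rw [mul_comm, mul_div_assoc, div_self, mul_one]
  exact_mod_cast (Real.sqrt_pos.mpr hsp).ne'

lemma v_ne (w : ℂ) (hw : ‖w * (1 + w)‖ = 1) : w + 1/2 ≠ 0 := by
  intro h
  have : w = -1/2 := by linear_combination h
  rw [this, show ((-1/2 : ℂ) * (1 + -1/2)) = -(1/4) by ring, norm_neg,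
    show ((1:ℂ)/4) = (((1:ℝ)/4 : ℝ):ℂ) by norm_num, Complex.norm_real, Real.norm_eq_abs] at hw
  rw [abs_of_pos (by norm_num)] at hw
  norm_num at hw

lemma F_G (w : ℂ) (hw : ‖w * (1 + w)‖ = 1) : F (G w) = w := by
  set v := w + 1/2 with hv
  have hvne : v ≠ 0 := v_ne w hw
  set r := ‖v‖ with hrdef
  have hr : 0 < r := by simpa [hrdef] using (norm_pos_iff.mpr hvne)
  set u := G w with hu
  have huv : u = v / (r : ℂ) := rfl
  have hrne : ((r:ℝ):ℂ) ≠ 0 := by exact_mod_cast hr.ne'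
  have hru : ((r:ℝ):ℂ) * u = v := by
    rw [huv]; field_simp
  have habsu : ‖u‖ = 1 := by
    rw [huv, norm_div, Complex.norm_real, Real.norm_eq_abs, abs_of_pos hr]
    exact div_self hr.ne'
  -- key equation: normSq (v^2 - 1/4) = 1
  have hcurve : Complex.normSq (v^2 - 1/4) = 1 := by
    have : w * (1 + w) = v^2 - 1/4 := by rw [hv]; ring
    rw [← this, Complex.normSq_eq_norm_sq, hw]; norm_num
  have hnv2 : (v^2).re^2 + (v^2).im^2 = r^4 := by
    have : Complex.normSq (v^2) = r^4 := by
      rw [map_pow, Complex.normSq_eq_norm_sq, ← hrdef]; ring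
    simpa [Complex.normSq_apply, sq] using this
  have heq : r^4 - (v^2).re/2 + 1/16 = 1 := by
    have := hcurve
    simp only [Complex.normSq_apply, Complex.sub_re, Complex.sub_im] at this
    norm_num at this
    nlinarith [this, hnv2]
  -- t = (u^2).re
  have htu : (u^2).re = (v^2).re / r^2 := by
    rw [huv, div_pow]
    rw [show ((r:ℝ):ℂ)^2 = ((r^2 : ℝ):ℂ) by push_cast; ring]
    rw [Complex.div_ofReal_re]
  have hr2 : r^2 = sfn ((u^2).re) := by
    apply sfn_unique (by positivity)
    rw [htu]
    field_simp
    nlinarith [heq]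
  have hsq : Real.sqrt (sfn ((u^2).re)) = r := by
    rw [← hr2, Real.sqrt_sq hr.le]
  have h5 : ((r:ℝ):ℂ) * u = w + 1/2 := by rw [hru]
  unfold F
  rw [hsq]
  linear_combination h5

lemma G_cont : ContinuousOn G {w : ℂ | w + 1/2 ≠ 0} := by
  apply ContinuousOn.div
  · exact (continuous_id.add continuous_const).continuousOn
  · exact (Complex.continuous_ofReal.comp
      (continuous_norm.comp (continuous_id.add continuous_const))).continuousOn
  · intro w hw
    simp only [ne_eq, Complex.ofReal_eq_zero, norm_eq_zero]
    exact hw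

lemma F_cont : Continuous F := by
  unfold F
  apply Continuous.add continuous_const
  apply Continuous.mul _ continuous_id
  apply Complex.continuous_ofReal.comp
  apply Real.continuous_sqrt.comp
  unfold sfn
  fun_prop

/-- The set `{w ∈ ℂ : |w(1+w)| = 1}` is homeomorphic to the circle `S¹`. -/
theorem gieseking_solution_set_homeomorphic_circle :
    Nonempty (({w : ℂ | ‖w * (1 + w)‖ = 1} : Set ℂ) ≃ₜ
      (Metric.sphere (0 : ℂ) 1 : Set ℂ)) := by
  have hmem : ∀ u : ℂ, u ∈ Metric.sphere (0:ℂ) 1 → ‖u‖ = 1 := by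
    intro u hu
    simpa [Complex.dist_eq] using hu
  refine ⟨Homeomorph.mk ⟨fun w => ⟨G w.1, ?_⟩, fun u => ⟨F u.1, ?_⟩, ?_, ?_⟩ ?_ ?_⟩
  · -- G maps curve to sphere
    obtain ⟨w, hw⟩ := w
    have hvne := v_ne w hw
    have hr : 0 < ‖w + 1/2‖ := norm_pos_iff.mpr hvne
    simp only [Metric.mem_sphere, Complex.dist_eq, sub_zero]
    unfold G
    rw [norm_div, Complex.norm_real, Real.norm_eq_abs, abs_of_pos hr]
    exact div_self hr.ne'
  · -- F maps sphere to curve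
    obtain ⟨u, hu⟩ := u
    exact F_mem u (hmem u hu)
  · -- left inverse: F (G w) = w
    rintro ⟨w, hw⟩
    exact Subtype.ext (F_G w hw)
  · -- right inverse: G (F u) = u
    rintro ⟨u, hu⟩
    exact Subtype.ext (G_F u (hmem u hu))
  · -- continuity of G restricted
    apply Continuous.subtype_mk
    exact G_cont.comp_continuous continuous_subtype_val (fun w => v_ne w.1 w.2)
  · apply Continuous.subtype_mk
    exact F_cont.comp continuous_subtype_val
end

section
/- The image of the map w ↦ 1 + w + |w|² restricted to {w ∈ ℂ : |w(1+w)| = 1} equals {x ∈ ℂ : |x - 1| = 1 and Re(x) ≥ 3/2}. -/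
lemma gieseking_key (w : ℂ) :
    ‖w + (Complex.normSq w : ℂ)‖ = ‖w * (1 + w)‖ := by
  have h : w + (Complex.normSq w : ℂ) = w * (1 + (starRingEnd ℂ) w) := by
    rw [← Complex.mul_conj]; ring
  rw [h, norm_mul, norm_mul]
  congr 1
  have h2 : (1 : ℂ) + (starRingEnd ℂ) w = (starRingEnd ℂ) (1 + w) := by
    simp
  rw [h2, Complex.norm_conj]

/-- The image of `w ↦ 1 + w + |w|²` on `{w : |w(1+w)| = 1}` is the arc
`{x : |x-1| = 1, Re x ≥ 3/2}`. -/
theorem gieseking_trace_image :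
    (fun w : ℂ => 1 + w + ((‖w‖ : ℝ) : ℂ) ^ 2) ''
        {w : ℂ | ‖w * (1 + w)‖ = 1}
      = {x : ℂ | ‖x - 1‖ = 1 ∧ 3 / 2 ≤ x.re} := by
  ext x
  simp only [Set.mem_image, Set.mem_setOf_eq]
  constructor
  · rintro ⟨w, hw, rfl⟩
    have hcast : ((‖w‖ : ℝ) : ℂ) ^ 2 = (Complex.normSq w : ℂ) := by
      rw [← Complex.ofReal_pow, Complex.sq_norm]
    constructor
    · have : 1 + w + ((‖w‖ : ℝ) : ℂ) ^ 2 - 1 = w + (Complex.normSq w : ℂ) := by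
        rw [hcast]; ring
      rw [this, gieseking_key w, hw]
    · -- real part inequality
      have hsq : Complex.normSq (w * (1 + w)) = 1 := by
        rw [← Complex.sq_norm, hw]; norm_num
      have hns : Complex.normSq w * (1 + 2 * w.re + Complex.normSq w) = 1 := by
        rw [Complex.normSq_mul] at hsq
        have h1 : Complex.normSq (1 + w) = 1 + 2 * w.re + Complex.normSq w := by
          simp [Complex.normSq_apply, Complex.add_re, Complex.add_im]
          ring
        rw [h1] at hsq; exact hsq
      have hre : (1 + w + ((‖w‖ : ℝ) : ℂ) ^ 2).re
          = 1 + w.re + Complex.normSq w := by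
        rw [hcast]
        simp [Complex.add_re]
      rw [hre]
      set s := Complex.normSq w with hs
      have hb : s = w.re ^ 2 + w.im ^ 2 := by rw [hs, Complex.normSq_apply]; ring
      have hspos : 0 < s := by
        rcases (Complex.normSq_nonneg w).lt_or_eq with h | h
        · exact h
        · exfalso; rw [hs, ← h] at hns; simp at hns
      nlinarith [hns, hspos, sq_nonneg (s - 1), mul_pos hspos hspos]
  · rintro ⟨habs, hre⟩
    set r : ℝ := x.re - 1 with hr
    have hr2 : (1 : ℝ) / 2 ≤ r := by simp [hr]; linarith
    have hD : 0 ≤ (1 + 2 * r) ^ 2 - 4 := by nlinarith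
    set t : ℝ := Real.sqrt ((1 + 2 * r) ^ 2 - 4) with ht
    have ht2 : t * t = (1 + 2 * r) ^ 2 - 4 := Real.mul_self_sqrt hD
    set s : ℝ := ((1 + 2 * r) - t) / 2 with hsdef
    have hquad : s ^ 2 - (1 + 2 * r) * s + 1 = 0 := by
      rw [hsdef]; field_simp; nlinarith [ht2]
    set w : ℂ := (x - 1) - (s : ℂ) with hwdef
    have hwre : w.re = r - s := by simp [hwdef, hr]
    have hwim : w.im = x.im := by simp [hwdef]
    have hx1 : Complex.normSq (x - 1) = 1 := by
      rw [← Complex.sq_norm, habs]; norm_num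
    have hx1' : (x.re - 1) ^ 2 + x.im ^ 2 = 1 := by
      rw [Complex.normSq_apply] at hx1
      simp at hx1
      nlinarith [hx1]
    have hns : Complex.normSq w = s := by
      rw [Complex.normSq_apply, hwre, hwim]
      have : (r - s) ^ 2 + x.im ^ 2 = (x.re - 1) ^ 2 + x.im ^ 2 - 2 * r * s + s ^ 2 := by
        rw [hr]; ring
      nlinarith [hquad, hx1']
    refine ⟨w, ?_, ?_⟩
    · rw [← gieseking_key w, hns]
      have : w + (s : ℂ) = x - 1 := by rw [hwdef]; ring
      rw [this, habs]
    · have hcast : ((‖w‖ : ℝ) : ℂ) ^ 2 = (s : ℂ) := by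
        rw [← Complex.ofReal_pow, Complex.sq_norm, hns]
      simp only [hcast]
      rw [hwdef]; ring
end

section
/- Let U, V : ℂ ∪ {∞} → ℂ ∪ {∞} be the anti-Möbius maps U(z) = 1/(((1+ω)/|ω|²)·conj(z) + 1) and V(z) = −(1+ω)·conj(z) + 1, for ω ∈ ℂ with Im(ω) > 0. Then U⁻¹V⁻¹U²V² is the identity transformation if and only if |ω(1+ω)| = 1. -/
open Complex

/-- The anti-Möbius map `U(z) = 1/(((1+ω)/|ω|²) conj z + 1)` on `ℂ ∪ {∞}`,
modelled on `Option ℂ` (`none` being `∞`). -/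
noncomputable def giesekingU (ω : ℂ) : Option ℂ → Option ℂ := fun z =>
  match z with
  | none => some 0
  | some z =>
      if (1 + ω) / ((‖ω‖ : ℝ) : ℂ) ^ 2 * (starRingEnd ℂ) z + 1 = 0 then none
      else some (1 / ((1 + ω) / ((‖ω‖ : ℝ) : ℂ) ^ 2 * (starRingEnd ℂ) z + 1))

/-- The anti-Möbius map `V(z) = -(1+ω) conj z + 1` on `ℂ ∪ {∞}`. -/
noncomputable def giesekingV (ω : ℂ) : Option ℂ → Option ℂ := fun z =>
  match z with
  | none => none
  | some z => some (-(1 + ω) * (starRingEnd ℂ) z + 1)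

private lemma U_none (ω : ℂ) : giesekingU ω none = some 0 := rfl
private lemma U_some (ω z : ℂ) : giesekingU ω (some z) =
    if (1 + ω) / ((‖ω‖ : ℝ) : ℂ) ^ 2 * (starRingEnd ℂ) z + 1 = 0 then none
    else some (1 / ((1 + ω) / ((‖ω‖ : ℝ) : ℂ) ^ 2 * (starRingEnd ℂ) z + 1)) := rfl
private lemma V_none (ω : ℂ) : giesekingV ω none = none := rfl
private lemma V_some (ω z : ℂ) : giesekingV ω (some z) =
    some (-(1 + ω) * (starRingEnd ℂ) z + 1) := rfl

set_option maxHeartbeats 1000000 in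
/-- The edge-cycle condition `U⁻¹V⁻¹U²V² = Id` (equivalently `U²V² = VU` as
transformations of `ℂ ∪ {∞}`) holds iff `|ω(1+ω)| = 1`. -/
theorem gieseking_edge_cycle_iff (ω : ℂ) (hω : 0 < ω.im) :
    (giesekingU ω ∘ giesekingU ω ∘ giesekingV ω ∘ giesekingV ω
        = giesekingV ω ∘ giesekingU ω) ↔
      ‖ω * (1 + ω)‖ = 1 := by
  have n3 : (1:ℂ) + ω ≠ 0 := by
    intro h
    have : ω = -1 := by linear_combination h
    rw [this] at hω; simp at hω
  have n1 : ω ≠ 0 := by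
    intro h; rw [h] at hω; simp at hω
  have n2 : (starRingEnd ℂ) ω ≠ 0 := by simpa using n1
  have hN : 0 < Complex.normSq (1+ω) := Complex.normSq_pos.mpr n3
  have hm : ((‖ω‖ : ℝ) : ℂ) ^ 2 = ω * (starRingEnd ℂ) ω := by
    rw [← Complex.ofReal_pow, Complex.sq_norm]
    exact (Complex.mul_conj ω).symm
  have n4 : (1:ℂ) + (starRingEnd ℂ) ω ≠ 0 := by
    intro h
    have h1 : (starRingEnd ℂ) ω = -1 := by linear_combination h
    have h2 : ω = -1 := by simpa using congrArg (starRingEnd ℂ) h1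
    rw [h2] at hω; simp at hω
  have n5 : (1:ℂ) + (starRingEnd ℂ) ω + ω * (starRingEnd ℂ) ω ≠ 0 := by
    intro h
    rw [Complex.mul_conj] at h
    have him := congrArg Complex.im h
    simp [Complex.add_im, Complex.conj_im] at him
    linarith
  have cancel : ∀ a b : ℂ, a ≠ 0 → a * b = 0 → b = 0 := fun a b ha h => by
    rcases mul_eq_zero.mp h with h|h
    · exact absurd h ha
    · exact h
  constructor
  · -- forward direction: evaluate at z = -ω
    intro H
    have h := congrFun H (some (-ω))
    simp only [Function.comp_apply] at h
    rw [V_some, V_some, U_some, U_some] at h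
    simp only [map_add, map_mul, map_neg, map_div₀, map_one, map_pow, map_zero, Complex.conj_conj, Complex.conj_ofReal] at h
    rw [hm] at h
    split_ifs at h with hc1 hc2 hc3
    · -- both poles: some 0 = none, impossible
      rw [U_none, V_none] at h; cases h
    · -- intermediate pole with finite RHS: contradiction
      rw [U_none, V_some, Option.some_inj] at h
      simp only [map_add, map_mul, map_neg, map_div₀, map_one, map_pow, map_zero, Complex.conj_conj, Complex.conj_ofReal] at h
      have hDc : (1 + (starRingEnd ℂ) ω) / ((starRingEnd ℂ) ω * ω) * -ω + 1 ≠ 0 := by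
        intro hx
        apply hc2
        have hx' := congrArg (starRingEnd ℂ) hx
        simp only [map_add, map_mul, map_neg, map_div₀, map_one, map_pow, map_zero, Complex.conj_conj, Complex.conj_ofReal] at hx'
        linear_combination hx'
      have hF : -((1 + (starRingEnd ℂ) ω) * ω) + (starRingEnd ℂ) ω * ω ≠ 0 := by
        intro hx; exact n1 (by linear_combination -hx)
      field_simp [hDc, hF] at h
      rcases mul_eq_zero.mp (show ω * (1 + (starRingEnd ℂ) ω + ω * (starRingEnd ℂ) ω) = 0 by
        linear_combination ω * h) with hx|hx
      · exact absurd hx n1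
      · exact absurd hx n5
    · -- RHS pole cannot happen at z = -ω
      field_simp at hc3
      exact absurd (by linear_combination -(starRingEnd ℂ) ω * hc3 : (starRingEnd ℂ) ω = 0) n2
    · -- main case: extract the equation
      rw [U_some, V_some] at h
      simp only [map_add, map_mul, map_neg, map_div₀, map_one, map_pow, map_zero, Complex.conj_conj, Complex.conj_ofReal] at h
      split_ifs at h with hc4
      rw [hm] at h hc4
      rw [Option.some_inj] at h
      have hd1c : (1 + (starRingEnd ℂ) ω) / ((starRingEnd ℂ) ω * ω) *
          (-(1 + ω) * (-(1 + (starRingEnd ℂ) ω) * -ω + 1) + 1) + 1 ≠ 0 := by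
        intro hx
        apply hc1
        have hx' := congrArg (starRingEnd ℂ) hx
        simp only [map_add, map_mul, map_neg, map_div₀, map_one, map_pow, map_zero, Complex.conj_conj, Complex.conj_ofReal] at hx'
        linear_combination hx'
      have hDc : (1 + (starRingEnd ℂ) ω) / ((starRingEnd ℂ) ω * ω) * -ω + 1 ≠ 0 := by
        intro hx
        apply hc3
        have hx' := congrArg (starRingEnd ℂ) hx
        simp only [map_add, map_mul, map_neg, map_div₀, map_one, map_pow, map_zero, Complex.conj_conj, Complex.conj_ofReal] at hx'
        linear_combination hx'
      have hE : (1 + (starRingEnd ℂ) ω) * ((-ω + -1) * (-((-(starRingEnd ℂ) ω + -1) * ω) + 1) + 1)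
          + (starRingEnd ℂ) ω * ω ≠ 0 := by
        intro hx
        apply hc1
        have hx' := congrArg (starRingEnd ℂ) hx
        simp only [map_add, map_mul, map_neg, map_div₀, map_one, map_pow, map_zero, Complex.conj_conj, Complex.conj_ofReal] at hx'
        field_simp
        linear_combination hx'
      have hF : -((1 + (starRingEnd ℂ) ω) * ω) + (starRingEnd ℂ) ω * ω ≠ 0 := by
        intro hx; exact n1 (by linear_combination -hx)
      field_simp [hd1c, hDc, hE, hF] at h hc4
      rw [div_eq_iff hc4] at h
      have hz : ω^2 * (starRingEnd ℂ) ω * ((1+ω)*(1+(starRingEnd ℂ) ω)) *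
          (ω * (starRingEnd ℂ) ω * ((1+ω)*(1+(starRingEnd ℂ) ω)) - 1) = 0 := by linear_combination (-ω*(ω*(starRingEnd ℂ) ω)*((1 + (starRingEnd ℂ) ω) * ((-ω + -1) * (-((-(starRingEnd ℂ) ω + -1) * ω) + 1) + 1) + (starRingEnd ℂ) ω * ω)) * h + (ω*(ω*(starRingEnd ℂ) ω)*(1+(starRingEnd ℂ) ω+ω*(starRingEnd ℂ) ω)*(1+ω)) * mul_inv_cancel₀ hE
      have hprod : ω^2 * (starRingEnd ℂ) ω * ((1+ω)*(1+(starRingEnd ℂ) ω)) ≠ 0 :=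
        mul_ne_zero (mul_ne_zero (pow_ne_zero _ n1) n2) (mul_ne_zero n3 n4)
      have key : ω * (starRingEnd ℂ) ω * ((1+ω)*(1+(starRingEnd ℂ) ω)) = 1 := by
        have := (mul_eq_zero.mp hz).resolve_left hprod
        linear_combination this
      have key2 : (ω*(1+ω)) * (starRingEnd ℂ) (ω*(1+ω)) = 1 := by
        rw [map_mul, map_add, map_one]
        linear_combination key
      rw [Complex.mul_conj] at key2
      have key3 : Complex.normSq (ω*(1+ω)) = 1 := by
        exact_mod_cast key2
      rw [Complex.norm_def, key3, Real.sqrt_one]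
  · -- reverse direction
    intro H
    have hc : ω * (starRingEnd ℂ) ω * ((1+ω)*(1+(starRingEnd ℂ) ω)) = 1 := by
      have h1 : Complex.normSq (ω*(1+ω)) = 1 := by
        rw [← Complex.sq_norm, H]; norm_num
      have h2 : (ω*(1+ω)) * (starRingEnd ℂ) (ω*(1+ω)) = 1 := by
        rw [Complex.mul_conj, h1]; norm_num
      rw [map_mul, map_add, map_one] at h2
      linear_combination h2
    funext z
    cases z with
    | none => simp [giesekingU, giesekingV]
    | some z =>
      simp only [Function.comp_apply]
      rw [V_some, V_some, U_some, U_some]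
      simp only [map_add, map_mul, map_neg, map_div₀, map_one, map_pow, map_zero, Complex.conj_conj, Complex.conj_ofReal]
      rw [hm]
      split_ifs with hc1 hc2 hc3
      · -- C1, C2 : contradiction with hc
        field_simp at hc1 hc2
        exact absurd (show (1:ℂ) + (starRingEnd ℂ) ω = 0 by
          linear_combination -hc1 + ((1+ω)*(1+(starRingEnd ℂ) ω))*hc2 - hc) n4
      · -- C1, ¬C2 : some 0 = value
        rw [U_none, V_some, Option.some_inj]
        simp only [map_add, map_mul, map_neg, map_div₀, map_one, map_pow, map_zero, Complex.conj_conj, Complex.conj_ofReal]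
        have hDz : (1 + (starRingEnd ℂ) ω) / ((starRingEnd ℂ) ω * ω) * z + 1 ≠ 0 := by
          intro hx
          apply hc2
          have hx' := congrArg (starRingEnd ℂ) hx
          simp only [map_add, map_mul, map_neg, map_div₀, map_one, map_pow, map_zero, Complex.conj_conj, Complex.conj_ofReal] at hx'
          linear_combination hx'
        have hc1' := congrArg (starRingEnd ℂ) hc1
        simp only [map_add, map_mul, map_neg, map_div₀, map_one, map_pow, map_zero, Complex.conj_conj, Complex.conj_ofReal] at hc1'
        field_simp at hc1'
        have hG : (1 + (starRingEnd ℂ) ω) * z + (starRingEnd ℂ) ω * ω ≠ 0 := by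
          intro hx
          apply hDz
          field_simp
          linear_combination hx
        field_simp [hG]
        have hT := cancel _ _ (mul_ne_zero n3 n4)
          (show ((1+ω)*(1+(starRingEnd ℂ) ω)) * ((1+(starRingEnd ℂ) ω)*z - (starRingEnd ℂ) ω * ω^2) = 0 by
            linear_combination hc1' - ω*hc)
        linear_combination (-(((1 + (starRingEnd ℂ) ω) * z + (starRingEnd ℂ) ω * ω)⁻¹)) * hT + mul_inv_cancel₀ hG
      · -- ¬C1, C2
        rw [U_some, V_none]
        simp only [map_add, map_mul, map_neg, map_div₀, map_one, map_pow, map_zero, Complex.conj_conj, Complex.conj_ofReal]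
        split_ifs with hc4
        · rfl
        · exfalso
          apply hc4
          rw [hm]
          have hd1c : (1 + (starRingEnd ℂ) ω) / ((starRingEnd ℂ) ω * ω) * (-(1 + ω) * (-(1 + (starRingEnd ℂ) ω) * z + 1) + 1) + 1 ≠ 0 := by
            intro hx
            apply hc1
            have hx' := congrArg (starRingEnd ℂ) hx
            simp only [map_add, map_mul, map_neg, map_div₀, map_one, map_pow, map_zero, Complex.conj_conj, Complex.conj_ofReal] at hx'
            linear_combination hx'
          have hc3' := congrArg (starRingEnd ℂ) hc3
          simp only [map_add, map_mul, map_neg, map_div₀, map_one, map_pow, map_zero, Complex.conj_conj, Complex.conj_ofReal] at hc3'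
          field_simp at hc3'
          have hE : (1 + (starRingEnd ℂ) ω) * ((-ω + -1) * ((-(starRingEnd ℂ) ω + -1) * z + 1) + 1) + (starRingEnd ℂ) ω * ω ≠ 0 := by
            intro hx
            apply hd1c
            field_simp
            linear_combination hx
          field_simp [n1, n2, hd1c, hE]
          linear_combination (((1 + (starRingEnd ℂ) ω) * ((-ω + -1) * ((-(starRingEnd ℂ) ω + -1) * z + 1) + 1) + (starRingEnd ℂ) ω * ω)⁻¹ * ((1+ω)*(1+(starRingEnd ℂ) ω))) * hc3' - ((1 + (starRingEnd ℂ) ω) * ((-ω + -1) * ((-(starRingEnd ℂ) ω + -1) * z + 1) + 1) + (starRingEnd ℂ) ω * ω)⁻¹ * hc - mul_inv_cancel₀ hE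
      · -- ¬C1, ¬C2
        rw [U_some, V_some]
        simp only [map_add, map_mul, map_neg, map_div₀, map_one, map_pow, map_zero, Complex.conj_conj, Complex.conj_ofReal]
        split_ifs with hc4
        · exfalso
          apply hc3
          rw [hm] at hc4
          have hd1c : (1 + (starRingEnd ℂ) ω) / ((starRingEnd ℂ) ω * ω) * (-(1 + ω) * (-(1 + (starRingEnd ℂ) ω) * z + 1) + 1) + 1 ≠ 0 := by
            intro hx
            apply hc1
            have hx' := congrArg (starRingEnd ℂ) hx
            simp only [map_add, map_mul, map_neg, map_div₀, map_one, map_pow, map_zero, Complex.conj_conj, Complex.conj_ofReal] at hx'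
            linear_combination hx'
          have hE : (1 + (starRingEnd ℂ) ω) * ((-ω + -1) * ((-(starRingEnd ℂ) ω + -1) * z + 1) + 1) + (starRingEnd ℂ) ω * ω ≠ 0 := by
            intro hx
            apply hd1c
            field_simp
            linear_combination hx
          field_simp [n1, n2, hd1c, hE] at hc4
          have hc4' := congrArg (starRingEnd ℂ) hc4
          simp only [map_add, map_mul, map_neg, map_div₀, map_one, map_pow, map_zero, Complex.conj_conj, Complex.conj_ofReal] at hc4'
          have hT := cancel _ _ (mul_ne_zero (mul_ne_zero (mul_ne_zero n1 n2) n3) n4)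
            (show ω * (starRingEnd ℂ) ω * (1+ω) * (1+(starRingEnd ℂ) ω) * ((1+ω) * (starRingEnd ℂ) z + ω * (starRingEnd ℂ) ω) = 0 by
              have hJ : ((1 + ω) * (-((1 + (starRingEnd ℂ) ω) * (-((1 + ω) * (starRingEnd ℂ) z) + 1)) + 1) + (starRingEnd ℂ) ω * ω) ≠ 0 := by intro hx; rw [hx] at hc4'; simp at hc4'
              linear_combination (ω * (starRingEnd ℂ) ω * ((1 + ω) * (-((1 + (starRingEnd ℂ) ω) * (-((1 + ω) * (starRingEnd ℂ) z) + 1)) + 1) + (starRingEnd ℂ) ω * ω)) * hc4' - (ω * (starRingEnd ℂ) ω * (1 + (starRingEnd ℂ) ω)) * mul_inv_cancel₀ hJ + (ω * (starRingEnd ℂ) ω) * hc)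
          field_simp
          linear_combination hT
        · rw [Option.some_inj]
          rw [hm] at hc4 ⊢
          have hd1c : (1 + (starRingEnd ℂ) ω) / ((starRingEnd ℂ) ω * ω) * (-(1 + ω) * (-(1 + (starRingEnd ℂ) ω) * z + 1) + 1) + 1 ≠ 0 := by
            intro hx
            apply hc1
            have hx' := congrArg (starRingEnd ℂ) hx
            simp only [map_add, map_mul, map_neg, map_div₀, map_one, map_pow, map_zero, Complex.conj_conj, Complex.conj_ofReal] at hx'
            linear_combination hx'
          have hDz : (1 + (starRingEnd ℂ) ω) / ((starRingEnd ℂ) ω * ω) * z + 1 ≠ 0 := by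
            intro hx
            apply hc3
            have hx' := congrArg (starRingEnd ℂ) hx
            simp only [map_add, map_mul, map_neg, map_div₀, map_one, map_pow, map_zero, Complex.conj_conj, Complex.conj_ofReal] at hx'
            linear_combination hx'
          have hE : (1 + (starRingEnd ℂ) ω) * ((-ω + -1) * ((-(starRingEnd ℂ) ω + -1) * z + 1) + 1) + (starRingEnd ℂ) ω * ω ≠ 0 := by
            intro hx
            apply hd1c
            field_simp
            linear_combination hx
          have hG : (1 + (starRingEnd ℂ) ω) * z + (starRingEnd ℂ) ω * ω ≠ 0 := by
            intro hx
            apply hDz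
            field_simp
            linear_combination hx
          field_simp [n1, n2, hd1c, hDz, hE, hG] at hc4 ⊢
          linear_combination ((1+ω)*((1 + (starRingEnd ℂ) ω) * z)*((1 + (starRingEnd ℂ) ω) * ((-ω + -1) * ((-(starRingEnd ℂ) ω + -1) * z + 1) + 1) + (starRingEnd ℂ) ω * ω)⁻¹*((1 + (starRingEnd ℂ) ω) * z + (starRingEnd ℂ) ω * ω)⁻¹) * hc + ((((1 + (starRingEnd ℂ) ω) * z + (starRingEnd ℂ) ω * ω) - (ω*(starRingEnd ℂ) ω)*(1+ω))*((1 + (starRingEnd ℂ) ω) * z + (starRingEnd ℂ) ω * ω)⁻¹ - 1 - 2*(((1 + (starRingEnd ℂ) ω) * z + (starRingEnd ℂ) ω * ω)*((1 + (starRingEnd ℂ) ω) * z + (starRingEnd ℂ) ω * ω)⁻¹ - 1)) * mul_inv_cancel₀ hE + (((1+ω)+((1 + (starRingEnd ℂ) ω) * ((-ω + -1) * ((-(starRingEnd ℂ) ω + -1) * z + 1) + 1) + (starRingEnd ℂ) ω * ω))*((1 + (starRingEnd ℂ) ω) * ((-ω + -1) * ((-(starRingEnd ℂ) ω + -1) *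 z + 1) + 1) + (starRingEnd ℂ) ω * ω)⁻¹ - 1) * mul_inv_cancel₀ hG
end
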